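/- Let v1 and v2 be nonempty convex subsets of ℝ³ (EuclideanSpace ℝ (Fin 3)), let f : ℝ → ℝ be a shaping function, and let α ∈ [0,1]. Then the interpolated SDF, x ↦ (1−α)·f(SDF_{v1}(x)) + α·f(SDF_{v2}(x)), is a convex function on all of ℝ³ (ConvexOn ℝ Set.univ). -/

import Mathlib

/-- Signed distance function of a set `v`. -/
noncomputable def sdf (v : Set (EuclideanSpace ℝ (Fin 3)))
    (x : EuclideanSpace ℝ (Fin 3)) : ℝ :=
  Metric.infDist x v - Metric.infDist x vᶜ

namespace SdfAux

local notation "E" => EuclideanSpace ℝ (Fin 3)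

/-- If an open ball of radius `ρ` around `p ∈ v` is contained in `v` (and `vᶜ ≠ ∅`),
then `sdf v z ≤ dist z p - ρ`. -/
lemma sdf_le_of_ball_subset {v : Set E} (hc : vᶜ.Nonempty) {p : E} {ρ : ℝ}
    (hp : p ∈ v) (hρ : 0 ≤ ρ) (hb : Metric.ball p ρ ⊆ v) (z : E) :
    sdf v z ≤ dist z p - ρ := by
  by_cases hz : dist z p < ρ
  · have hzv : z ∈ v := hb (by simpa [Metric.mem_ball] using hz)
    have h1 : Metric.infDist z v = 0 := Metric.infDist_zero_of_mem hzv
    have h2 : ρ - dist z p ≤ Metric.infDist z vᶜ := by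
      by_contra h
      push_neg at h
      obtain ⟨u, hu, hdu⟩ := (Metric.infDist_lt_iff hc).1 h
      have hup : dist u p ≤ dist u z + dist z p := dist_triangle u z p
      have huball : u ∈ Metric.ball p ρ := by
        rw [Metric.mem_ball]
        rw [dist_comm] at hdu
        linarith
      exact hu (hb huball)
    simp only [sdf, h1]
    linarith
  · push_neg at hz
    have h2 : Metric.infDist z v ≤ dist z p - ρ := by
      rcases eq_or_lt_of_le hρ with h0 | hρpos
      · have := Metric.infDist_le_dist_of_mem (x := z) hp
        rw [← h0]; simpa using this
      · have hD : 0 < dist z p := lt_of_lt_of_le hρpos hz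
        refine le_of_forall_pos_le_add fun δ hδ => ?_
        set D := dist z p with hDdef
        set t : ℝ := (ρ - min δ ρ) / D with ht
        have htnn : 0 ≤ t := by
          apply div_nonneg _ (le_of_lt hD)
          have := min_le_right δ ρ; linarith
        have htle : t * D = ρ - min δ ρ := by
          rw [ht]; exact div_mul_cancel₀ _ (ne_of_gt hD)
        set q : E := p + t • (z - p) with hq
        have hqv : q ∈ v := by
          apply hb
          rw [Metric.mem_ball, hq]
          have : dist (p + t • (z - p)) p = t * D := by
            rw [dist_eq_norm]
            simp only [add_sub_cancel_left, norm_smul, Real.norm_of_nonneg htnn]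
            rw [hDdef, dist_eq_norm]
          rw [this, htle]
          have hmin : 0 < min δ ρ := lt_min hδ hρpos
          linarith
        have hdzq : dist z q = D - (ρ - min δ ρ) := by
          rw [dist_eq_norm, hq]
          have : z - (p + t • (z - p)) = (1 - t) • (z - p) := by
            module
          rw [this, norm_smul]
          have h1t : 0 ≤ 1 - t := by
            have : t * D ≤ ρ := by rw [htle]; have := min_le_right δ ρ; linarith [lt_min hδ hρpos]
            have htle1 : t ≤ 1 := by
              by_contra h
              push_neg at h
              nlinarith
            linarith
          rw [Real.norm_of_nonneg h1t, ← dist_eq_norm, ← hDdef]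
          nlinarith [htle]
        have := Metric.infDist_le_dist_of_mem (x := z) hqv
        rw [hdzq] at this
        have hmin : min δ ρ ≤ δ := min_le_left δ ρ
        linarith
    have h3 : 0 ≤ Metric.infDist z vᶜ := Metric.infDist_nonneg
    simp only [sdf]
    linarith

/-- Approximation: every point admits a ball certificate for its sdf value. -/
lemma exists_ball_approx {v : Set E} (hne : v.Nonempty) (x : E) {ε : ℝ} (hε : 0 < ε) :
    ∃ p ρ, p ∈ v ∧ 0 ≤ ρ ∧ Metric.ball p ρ ⊆ v ∧ dist x p - ρ ≤ sdf v x + ε := by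
  by_cases h : 0 < Metric.infDist x vᶜ
  · have hxv : x ∈ v := by
      by_contra hx
      rw [Metric.infDist_zero_of_mem (show x ∈ vᶜ from hx)] at h
      exact lt_irrefl 0 h
    refine ⟨x, Metric.infDist x vᶜ, hxv, le_of_lt h, ?_, ?_⟩
    · intro u hu
      by_contra huv
      have := Metric.infDist_le_dist_of_mem (x := x) (show u ∈ vᶜ from huv)
      rw [Metric.mem_ball] at hu
      rw [dist_comm] at this
      linarith
    · simp only [sdf, Metric.infDist_zero_of_mem hxv, dist_self]
      linarith
  · have he : Metric.infDist x vᶜ = 0 :=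
      le_antisymm (not_lt.1 h) Metric.infDist_nonneg
    have hlt : Metric.infDist x v < Metric.infDist x v + ε := by linarith
    obtain ⟨p, hp, hd⟩ := (Metric.infDist_lt_iff hne).1 hlt
    refine ⟨p, 0, hp, le_refl 0, by simp, ?_⟩
    simp only [sdf, he]
    linarith

/-- Minkowski combination of balls inside a convex set. -/
lemma ball_combo {v : Set E} (hcv : Convex ℝ v) {p q : E} {ρx ρy a b : ℝ}
    (hp : p ∈ v) (hq : q ∈ v) (hρx : 0 ≤ ρx) (hρy : 0 ≤ ρy)
    (hbp : Metric.ball p ρx ⊆ v) (hbq : Metric.ball q ρy ⊆ v)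
    (ha : 0 ≤ a) (hb : 0 ≤ b) (hab : a + b = 1) :
    Metric.ball (a • p + b • q) (a * ρx + b * ρy) ⊆ v := by
  intro u hu
  rw [Metric.mem_ball] at hu
  set ρ := a * ρx + b * ρy with hρdef
  have hρpos : 0 < ρ := lt_of_le_of_lt dist_nonneg hu
  set w : E := u - (a • p + b • q) with hw
  have hwn : ‖w‖ < ρ := by rw [hw, ← dist_eq_norm]; exact hu
  have key : ∀ (c : E) (r : ℝ), 0 ≤ r → c ∈ v → Metric.ball c r ⊆ v →
      c + (r / ρ) • w ∈ v := by
    intro c r hr hc hbc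
    rcases eq_or_lt_of_le hr with h0 | hrpos
    · simp [← h0, hc]
    · apply hbc
      rw [Metric.mem_ball, dist_eq_norm]
      simp only [add_sub_cancel_left, norm_smul]
      rw [Real.norm_of_nonneg (div_nonneg hr (le_of_lt hρpos))]
      calc r / ρ * ‖w‖ < r / ρ * ρ := by
            apply mul_lt_mul_of_pos_left hwn (div_pos hrpos hρpos)
        _ = r := by field_simp
  have h1 := key p ρx hρx hp hbp
  have h2 := key q ρy hρy hq hbq
  have hcomb := hcv h1 h2 ha hb hab
  have : a • (p + (ρx / ρ) • w) + b • (q + (ρy / ρ) • w) = u := by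
    have hne : ρ ≠ 0 := ne_of_gt hρpos
    have : a • (p + (ρx / ρ) • w) + b • (q + (ρy / ρ) • w)
        = (a • p + b • q) + ((a * ρx + b * ρy) / ρ) • w := by
      module
    rw [this, ← hρdef, div_self hne, one_smul, hw]
    abel
  rwa [this] at hcomb

/-- The signed distance function of a nonempty convex set is convex. -/
lemma sdf_convexOn {v : Set E} (hne : v.Nonempty) (hcv : Convex ℝ v) :
    ConvexOn ℝ Set.univ (sdf v) := by
  by_cases hc : vᶜ.Nonempty
  · refine ⟨convex_univ, fun x _ y _ a b ha hb hab => ?_⟩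
    refine le_of_forall_pos_le_add fun ε hε => ?_
    obtain ⟨p, ρx, hp, hρx, hbp, hxp⟩ := exists_ball_approx hne x hε
    obtain ⟨q, ρy, hq, hρy, hbq, hyq⟩ := exists_ball_approx hne y hε
    have hball := ball_combo hcv hp hq hρx hρy hbp hbq ha hb hab
    have hpv : a • p + b • q ∈ v := hcv hp hq ha hb hab
    have hρnn : 0 ≤ a * ρx + b * ρy :=
      add_nonneg (mul_nonneg ha hρx) (mul_nonneg hb hρy)
    have hmain := sdf_le_of_ball_subset hc hpv hρnn hball (a • x + b • y)
    have hdist : dist (a • x + b • y) (a • p + b • q) ≤ a * dist x p + b * dist y q := by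
      calc dist (a • x + b • y) (a • p + b • q)
          ≤ dist (a • x) (a • p) + dist (b • y) (b • q) := dist_add_add_le _ _ _ _
        _ = a * dist x p + b * dist y q := by
            rw [dist_smul₀, dist_smul₀, Real.norm_of_nonneg ha, Real.norm_of_nonneg hb]
    have := hmain.trans (by linarith : dist (a • x + b • y) (a • p + b • q)
        - (a * ρx + b * ρy) ≤ a * (dist x p - ρx) + b * (dist y q - ρy))
    have hx' : a * (dist x p - ρx) ≤ a * (sdf v x + ε) :=
      mul_le_mul_of_nonneg_left hxp ha
    have hy' : b * (dist y q - ρy) ≤ b * (sdf v y + ε) :=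
      mul_le_mul_of_nonneg_left hyq hb
    have hsmul : a • sdf v x + b • sdf v y = a * sdf v x + b * sdf v y := by
      simp [smul_eq_mul]
    rw [hsmul]
    nlinarith
  · have hv : v = Set.univ := by
      rw [Set.not_nonempty_iff_eq_empty, Set.compl_empty_iff] at hc
      exact hc
    subst hv
    have : sdf Set.univ = fun _ : E => 0 := by
      funext x
      simp [sdf, Metric.infDist_zero_of_mem (Set.mem_univ x), Set.compl_univ]
    rw [this]
    exact convexOn_const 0 convex_univ

end SdfAux

/-- For nonempty convex `v1, v2`, a shaping function `f` and `α ∈ [0,1]`, the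
interpolated SDF `x ↦ (1−α)·f(SDF_{v1}(x)) + α·f(SDF_{v2}(x))` is convex on ℝ³. -/
theorem interpolated_sdf_convexOn
    (v1 v2 : Set (EuclideanSpace ℝ (Fin 3)))
    (h1ne : v1.Nonempty) (h2ne : v2.Nonempty)
    (h1cv : Convex ℝ v1) (h2cv : Convex ℝ v2)
    (f : ℝ → ℝ) (hf0 : f 0 = 0) (hfmono : Monotone f)
    (hfconv : ConvexOn ℝ Set.univ f)
    (α : ℝ) (hα : α ∈ Set.Icc (0 : ℝ) 1) :
    ConvexOn ℝ Set.univ (fun x => (1 - α) * f (sdf v1 x) + α * f (sdf v2 x)) := by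
  have comp : ∀ v : Set (EuclideanSpace ℝ (Fin 3)), v.Nonempty → Convex ℝ v →
      ConvexOn ℝ Set.univ (fun x => f (sdf v x)) := by
    intro v hne hcv
    have hs := SdfAux.sdf_convexOn hne hcv
    refine ⟨convex_univ, fun x hx y hy a b ha hb hab => ?_⟩
    calc f (sdf v (a • x + b • y)) ≤ f (a • sdf v x + b • sdf v y) :=
          hfmono (hs.2 hx hy ha hb hab)
      _ ≤ a • f (sdf v x) + b • f (sdf v y) :=
          hfconv.2 (Set.mem_univ _) (Set.mem_univ _) ha hb hab
  have h1 := (comp v1 h1ne h1cv).smul (show (0:ℝ) ≤ 1 - α by linarith [hα.2])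
  have h2 := (comp v2 h2ne h2cv).smul hα.1
  exact h1.add h2
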